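/- Let 0 ≤ γ < 1 and suppose every task τᵢ satisfies Cᵢ/min{Tᵢ, Dᵢ} ≤ γ. In the deadline-monotonic partitioning algorithm, if assigning task τ_l fails the demand test C_l + Σ_{τ_j ∈ T_m} dbf*(τ_j, D_l) > D_l on processor m, then Σ_{τ_j ∈ T_m ∪ {τ_l}} (C_j/D_l + u_j·max{0, (D_l − D_j)/D_l}) > 1, and in particular Σ_{τ_j ∈ T_m} (C_j/min{T_j,D_j}) weighted appropriately yields a load of more than (1 − γ)/2 on processor m in at least one of the two measures (density at D_l or utilization). -/

import Mathlib

/-- Approximate demand bound function of a sporadic task (C, T, D) at time t. -/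
noncomputable def dbfStar (C T D t : ℝ) : ℝ :=
  if t < D then 0 else ((t - D) / T + 1) * C

theorem demand_test_failure_load {ι : Type*} [DecidableEq ι]
    (Tm : Finset ι) (l : ι) (hl : l ∉ Tm)
    (C T D : ι → ℝ) (γ : ℝ) (hγ₀ : 0 ≤ γ) (hγ₁ : γ < 1)
    (hpos : ∀ i ∈ Tm ∪ {l}, 0 < C i ∧ 0 < T i ∧ 0 < D i)
    (hγ : ∀ i ∈ Tm ∪ {l}, C i / min (T i) (D i) ≤ γ)
    (hDM : ∀ j ∈ Tm, D j ≤ D l)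
    (hfail : C l + ∑ j ∈ Tm, dbfStar (C j) (T j) (D j) (D l) > D l) :
    ∑ j ∈ Tm ∪ {l}, (C j / D l + (C j / T j) * max 0 ((D l - D j) / D l)) > 1 ∧
    (∑ j ∈ Tm, C j / D l > (1 - γ) / 2 ∨ ∑ j ∈ Tm, C j / T j > (1 - γ) / 2) := by
  have hlmem : l ∈ Tm ∪ {l} := by simp
  have hDl : 0 < D l := (hpos l hlmem).2.2
  have hdisj : Disjoint Tm {l} := by simpa using hl
  have hsplit : ∀ f : ι → ℝ, ∑ j ∈ Tm ∪ {l}, f j = (∑ j ∈ Tm, f j) + f l := by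
    intro f
    rw [Finset.sum_union hdisj, Finset.sum_singleton]
  have hterm : ∀ j ∈ Tm,
      C j / D l + (C j / T j) * max 0 ((D l - D j) / D l)
        = (C j + (C j / T j) * (D l - D j)) / D l := by
    intro j hj
    have hTj : (0:ℝ) < T j := (hpos j (Finset.mem_union_left _ hj)).2.1
    have hmax : max 0 ((D l - D j) / D l) = (D l - D j) / D l :=
      max_eq_right (div_nonneg (by linarith [hDM j hj]) hDl.le)
    rw [hmax]
    field_simp
  have hdbf : ∀ j ∈ Tm,
      dbfStar (C j) (T j) (D j) (D l) = C j + (C j / T j) * (D l - D j) := by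
    intro j hj
    have hTj : (0:ℝ) < T j := (hpos j (Finset.mem_union_left _ hj)).2.1
    rw [dbfStar, if_neg (not_lt.mpr (hDM j hj))]
    field_simp
    ring
  have key : ∑ j ∈ Tm ∪ {l}, (C j / D l + (C j / T j) * max 0 ((D l - D j) / D l))
      = (C l + ∑ j ∈ Tm, dbfStar (C j) (T j) (D j) (D l)) / D l := by
    rw [hsplit]
    rw [Finset.sum_congr rfl hterm, ← Finset.sum_div,
        Finset.sum_congr rfl hdbf]
    have : max 0 ((D l - D l) / D l) = 0 := by simp
    rw [this]
    field_simp
    ring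
  have hgoal1 : ∑ j ∈ Tm ∪ {l}, (C j / D l + (C j / T j) * max 0 ((D l - D j) / D l)) > 1 := by
    rw [key]
    exact (one_lt_div hDl).mpr hfail
  refine ⟨hgoal1, ?_⟩
  by_contra hcon
  push_neg at hcon
  obtain ⟨h1, h2⟩ := hcon
  -- C l / D l ≤ γ
  have hminl : min (T l) (D l) ≤ D l := min_le_right _ _
  have hminl0 : (0:ℝ) < min (T l) (D l) := lt_min (hpos l hlmem).2.1 hDl
  have hCl : C l / D l ≤ γ :=
    le_trans (div_le_div_of_nonneg_left (hpos l hlmem).1.le hminl0 hminl) (hγ l hlmem)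
  -- termwise bound on Tm
  have hbound : ∀ j ∈ Tm,
      C j / D l + (C j / T j) * max 0 ((D l - D j) / D l) ≤ C j / D l + C j / T j := by
    intro j hj
    have hTj : (0:ℝ) < T j := (hpos j (Finset.mem_union_left _ hj)).2.1
    have hCj : (0:ℝ) < C j := (hpos j (Finset.mem_union_left _ hj)).1
    have hDj : (0:ℝ) < D j := (hpos j (Finset.mem_union_left _ hj)).2.2
    have hle1 : max 0 ((D l - D j) / D l) ≤ 1 := by
      apply max_le (by norm_num)
      rw [div_le_one hDl]; linarith
    have := mul_le_mul_of_nonneg_left hle1 (div_nonneg hCj.le hTj.le)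
    linarith [this]
  have hsum : ∑ j ∈ Tm ∪ {l}, (C j / D l + (C j / T j) * max 0 ((D l - D j) / D l))
      ≤ (∑ j ∈ Tm, C j / D l) + (∑ j ∈ Tm, C j / T j) + γ := by
    rw [hsplit]
    have h0 : max 0 ((D l - D l) / D l) = 0 := by simp
    have hlterm : C l / D l + (C l / T l) * max 0 ((D l - D l) / D l) ≤ γ := by
      rw [h0]; simpa using hCl
    have hTm : ∑ j ∈ Tm, (C j / D l + (C j / T j) * max 0 ((D l - D j) / D l))
        ≤ (∑ j ∈ Tm, C j / D l) + (∑ j ∈ Tm, C j / T j) := by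
      rw [← Finset.sum_add_distrib]
      exact Finset.sum_le_sum hbound
    linarith
  linarith
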